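/- (Derivative of the linear interpolation error on the first interval). Let k₁ > 0 and let u : [0, k₁] → ℝ be continuously differentiable. There is a unique polynomial Πu of degree ≤ 1 with Πu(k₁) = u(k₁) and ∫₀^{k₁} (u(t) − Πu(t)) dt = 0, and its error η = Πu − u satisfies, for every t ∈ [0, k₁], η′(t) = −u′(t) + (2/k₁²) ∫₀^{k₁} s u′(s) ds. Consequently, ∫₀^{k₁} |η′(t)| dt ≤ 3 ∫₀^{k₁} |u′(t)| dt. -/

import Mathlib

open MeasureTheory Real Set intervalIntegral Polynomial

/-- Derivative of the linear interpolation error on the first interval: there is a unique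
polynomial `Πu` of degree `≤ 1` matching `u` at the right endpoint `k₁` and having the
same mean as `u` on `(0,k₁)`; its error `η = Πu - u` satisfies
`η′(t) = -u′(t) + (2/k₁²)∫₀^{k₁} s u′(s) ds`, and consequently
`∫₀^{k₁} |η′| ≤ 3 ∫₀^{k₁} |u′|`. -/
theorem linear_interpolation_error_first_interval
    (k₁ : ℝ) (hk : 0 < k₁) (u : ℝ → ℝ) (hu : ContDiff ℝ 1 u) :
    (∃! P : Polynomial ℝ, P.degree ≤ 1 ∧ P.eval k₁ = u k₁ ∧
        (∫ s in (0:ℝ)..k₁, (u s - P.eval s)) = 0) ∧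
    (∀ P : Polynomial ℝ, P.degree ≤ 1 → P.eval k₁ = u k₁ →
        (∫ s in (0:ℝ)..k₁, (u s - P.eval s)) = 0 →
      (∀ s ∈ Set.Icc (0:ℝ) k₁,
          deriv (fun y => P.eval y - u y) s =
            -deriv u s + (2 / k₁ ^ 2) * ∫ q in (0:ℝ)..k₁, q * deriv u q) ∧
      (∫ s in (0:ℝ)..k₁, |deriv (fun y => P.eval y - u y) s|) ≤
        3 * ∫ s in (0:ℝ)..k₁, |deriv u s|) := by
  have hucont : Continuous u := hu.continuous
  have hu' : Continuous (deriv u) := hu.continuous_deriv le_rfl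
  have hud : Differentiable ℝ u := hu.differentiable one_ne_zero
  have hk0 : k₁ ≠ 0 := hk.ne'
  set I : ℝ := ∫ s in (0:ℝ)..k₁, u s with hIdef
  set J : ℝ := ∫ q in (0:ℝ)..k₁, q * deriv u q with hJdef
  -- integral of a linear function
  have hlin : ∀ a b : ℝ, (∫ s in (0:ℝ)..k₁, (a * s + b)) = a * (k₁ ^ 2 / 2) + b * k₁ := by
    intro a b
    rw [intervalIntegral.integral_add
        ((continuous_const.mul continuous_id').intervalIntegrable (u := fun s => a * s) _ _)
        (intervalIntegrable_const), intervalIntegral.integral_const_mul]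
    simp only [integral_id, intervalIntegral.integral_const, smul_eq_mul]
    ring
  have hintP : ∀ a b : ℝ,
      (∫ s in (0:ℝ)..k₁, (u s - (a * s + b))) = I - (a * (k₁ ^ 2 / 2) + b * k₁) := by
    intro a b
    rw [intervalIntegral.integral_sub (hucont.intervalIntegrable _ _)
        (((continuous_const.mul continuous_id').add continuous_const).intervalIntegrable
          (u := fun s => a * s + b) _ _),
      hlin]
  -- integration by parts
  have hparts : J = k₁ * u k₁ - I := by
    have h := intervalIntegral.integral_mul_deriv_eq_deriv_mul
      (a := (0:ℝ)) (b := k₁) (u := fun x : ℝ => x) (u' := fun _ => (1 : ℝ)) (v := u) (v' := deriv u)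
      (fun x _ => hasDerivAt_id x) (fun x _ => (hud x).hasDerivAt)
      intervalIntegrable_const (hu'.intervalIntegrable _ _)
    simp only [one_mul, zero_mul, sub_zero] at h
    rw [hJdef, h, hIdef]
  -- the unique coefficients
  have hcoeff : ∀ P : Polynomial ℝ, P.degree ≤ 1 → P.eval k₁ = u k₁ →
      (∫ s in (0:ℝ)..k₁, (u s - P.eval s)) = 0 →
      P.coeff 1 = 2 / k₁ ^ 2 * J ∧ P.coeff 0 = u k₁ - 2 / k₁ ^ 2 * J * k₁ := by
    intro P hdeg hval hint
    have hP := Polynomial.eq_X_add_C_of_degree_le_one hdeg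
    have heval : ∀ s : ℝ, P.eval s = P.coeff 1 * s + P.coeff 0 := by
      intro s; conv_lhs => rw [hP]
      simp
    have h1 : P.coeff 1 * k₁ + P.coeff 0 = u k₁ := by rw [← heval k₁]; exact hval
    have h2 : P.coeff 1 * (k₁ ^ 2 / 2) + P.coeff 0 * k₁ = I := by
      have := hint
      simp only [heval] at this
      rw [hintP] at this
      linarith
    have hc1 : P.coeff 1 = 2 / k₁ ^ 2 * J := by
      rw [hparts]
      field_simp
      nlinarith [h1, h2]
    exact ⟨hc1, by nlinarith [h1, hc1]⟩
  have hder : ∀ P : Polynomial ℝ, P.degree ≤ 1 → ∀ s : ℝ,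
      deriv (fun y => P.eval y - u y) s = P.coeff 1 - deriv u s := by
    intro P hdeg s
    have hP := Polynomial.eq_X_add_C_of_degree_le_one hdeg
    have hd : P.derivative.eval s = P.coeff 1 := by
      conv_lhs => rw [hP]
      simp
    have h1 : HasDerivAt (fun y => P.eval y) (P.coeff 1) s := by
      simpa [hd] using P.hasDerivAt s
    exact (h1.sub (hud s).hasDerivAt).deriv
  constructor
  · -- existence and uniqueness
    set c₁ : ℝ := 2 / k₁ ^ 2 * J with hc1def
    set c₀ : ℝ := u k₁ - c₁ * k₁ with hc0def
    refine ⟨C c₁ * X + C c₀, ⟨degree_linear_le, ?_, ?_⟩, ?_⟩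
    · simp [hc0def]
    · have : (∫ s in (0:ℝ)..k₁, (u s - (C c₁ * X + C c₀).eval s))
          = ∫ s in (0:ℝ)..k₁, (u s - (c₁ * s + c₀)) := by
        apply intervalIntegral.integral_congr
        intro s _
        simp
      rw [this, hintP, hc0def, hc1def, hparts]
      field_simp
      ring
    · intro Q hQ
      obtain ⟨hq1, hq0⟩ := hcoeff Q hQ.1 hQ.2.1 hQ.2.2
      have := Polynomial.eq_X_add_C_of_degree_le_one hQ.1
      rw [this, hq1, hq0]
  · intro P hdeg hval hint
    obtain ⟨hc1, _⟩ := hcoeff P hdeg hval hint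
    constructor
    · intro s _
      rw [hder P hdeg s, hc1]
      ring
    · have habs : (∫ s in (0:ℝ)..k₁, |deriv (fun y => P.eval y - u y) s|)
          = ∫ s in (0:ℝ)..k₁, |P.coeff 1 - deriv u s| := by
        apply intervalIntegral.integral_congr
        intro s _
        simp only [hder P hdeg]
      rw [habs]
      have hint1 : IntervalIntegrable (fun s => |P.coeff 1 - deriv u s|) volume 0 k₁ :=
        ((continuous_const.sub hu').abs).intervalIntegrable _ _
      have hint2 : IntervalIntegrable (fun s => |P.coeff 1| + |deriv u s|) volume 0 k₁ :=
        (continuous_const.add hu'.abs).intervalIntegrable _ _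
      have hstep1 : (∫ s in (0:ℝ)..k₁, |P.coeff 1 - deriv u s|)
          ≤ ∫ s in (0:ℝ)..k₁, (|P.coeff 1| + |deriv u s|) :=
        intervalIntegral.integral_mono_on hk.le hint1 hint2
          (fun s _ => abs_sub _ _)
      have hstep2 : (∫ s in (0:ℝ)..k₁, (|P.coeff 1| + |deriv u s|))
          = k₁ * |P.coeff 1| + ∫ s in (0:ℝ)..k₁, |deriv u s| := by
        rw [intervalIntegral.integral_add intervalIntegrable_const
          (hu'.abs.intervalIntegrable _ _), intervalIntegral.integral_const]
        simp [smul_eq_mul]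
      -- bound |c₁|
      have hJabs : |J| ≤ k₁ * ∫ s in (0:ℝ)..k₁, |deriv u s| := by
        have h1 : |J| ≤ ∫ q in (0:ℝ)..k₁, |q * deriv u q| :=
          intervalIntegral.abs_integral_le_integral_abs hk.le
        have h2 : (∫ q in (0:ℝ)..k₁, |q * deriv u q|)
            ≤ ∫ q in (0:ℝ)..k₁, k₁ * |deriv u q| := by
          apply intervalIntegral.integral_mono_on hk.le
            (((continuous_id'.mul hu').abs).intervalIntegrable (u := fun q => |q * deriv u q|) _ _)
            ((continuous_const.mul hu'.abs).intervalIntegrable (u := fun q => k₁ * |deriv u q|) _ _)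
          intro q hq
          rw [abs_mul]
          apply mul_le_mul_of_nonneg_right _ (abs_nonneg _)
          rw [abs_of_nonneg hq.1]
          exact hq.2
        rw [intervalIntegral.integral_const_mul] at h2
        linarith
      have hc1abs : k₁ * |P.coeff 1| ≤ 2 * ∫ s in (0:ℝ)..k₁, |deriv u s| := by
        rw [hc1, abs_mul]
        have h2 : |2 / k₁ ^ 2| = 2 / k₁ ^ 2 := abs_of_pos (by positivity)
        rw [h2]
        rw [show k₁ * (2 / k₁ ^ 2 * |J|) = (2 / k₁) * |J| by field_simp]
        have := mul_le_mul_of_nonneg_left hJabs (by positivity : (0:ℝ) ≤ 2 / k₁)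
        calc 2 / k₁ * |J| ≤ 2 / k₁ * (k₁ * ∫ s in (0:ℝ)..k₁, |deriv u s|) := this
          _ = 2 * ∫ s in (0:ℝ)..k₁, |deriv u s| := by field_simp
      linarith
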